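/- Let $1 < p < \infty$, $0 < s < 1$, and $0 \le a \le \infty$. For every $f \in W^{1,p}_{\mathrm{loc}}((0,a))$ there holds $\int_0^a \int_0^a \frac{|f(x)-f(y)|^p}{|x-y|^{1+sp}}\,dx\,dy \le \frac{C}{s^p (1-s) p} \int_0^a x^{(1-s)p} |f'(x)|^p dx$ for an absolute constant $C$ (one may take $C = 2$). -/

import Mathlib

open MeasureTheory Set
open scoped ENNReal

section AuxHardy

lemma meas_rpow_const (c : ℝ) : Measurable fun t : ℝ => t ^ c := by measurability

lemma lint_shift (F : ℝ → ℝ≥0∞) (x : ℝ) (S : Set ℝ) :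
    ∫⁻ y in (fun y => y - x) ⁻¹' S, F (y - x) = ∫⁻ u in S, F u :=
  (measurePreserving_sub_right volume x).setLIntegral_comp_preimage_emb
    (MeasurableEquiv.subRight x).measurableEmbedding F S

lemma lint_Ioo_rpow {r c : ℝ} (hr : -1 < r) (hc : 0 ≤ c) :
    ∫⁻ u in Ioo 0 c, ENNReal.ofReal (u ^ r) = ENNReal.ofReal (c ^ (r + 1) / (r + 1)) := by
  have hi : IntegrableOn (fun u : ℝ => u ^ r) (Ioo 0 c) := by
    have := (intervalIntegral.intervalIntegrable_rpow' (a := 0) (b := c) hr)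
    rw [intervalIntegrable_iff_integrableOn_Ioo_of_le hc] at this
    exact this
  rw [← ofReal_integral_eq_lintegral_ofReal hi]
  · congr 1
    have : ∫ u in Ioo 0 c, u ^ r = ∫ u in (0:ℝ)..c, u ^ r := by
      rw [intervalIntegral.integral_of_le hc, MeasureTheory.integral_Ioc_eq_integral_Ioo]
    rw [this, integral_rpow (Or.inl hr), Real.zero_rpow (by linarith)]
    ring_nf
  · filter_upwards [ae_restrict_mem measurableSet_Ioo] with u hu
    exact Real.rpow_nonneg hu.1.le _

lemma lint_Ioo_rpow_shift {r x y : ℝ} (hr : -1 < r) (hxy : x ≤ y) :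
    ∫⁻ t in Ioo x y, ENNReal.ofReal ((t - x) ^ r)
      = ENNReal.ofReal ((y - x) ^ (r + 1) / (r + 1)) := by
  rw [← lint_Ioo_rpow hr (by linarith : (0:ℝ) ≤ y - x), ← lint_shift (fun u => ENNReal.ofReal (u ^ r)) x (Ioo 0 (y - x))]
  congr 1
  rw [Set.preimage_sub_const_Ioo]
  norm_num

lemma lint_Ioi_rpow_shift {r x t : ℝ} (hr : r < -1) (hxt : x < t) :
    ∫⁻ y in Ioi t, ENNReal.ofReal ((y - x) ^ r)
      = ENNReal.ofReal (-(t - x) ^ (r + 1) / (r + 1)) := by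
  have base : ∫⁻ u in Ioi (t - x), ENNReal.ofReal (u ^ r)
      = ENNReal.ofReal (-(t - x) ^ (r + 1) / (r + 1)) := by
    rw [← ofReal_integral_eq_lintegral_ofReal (integrableOn_Ioi_rpow_of_lt hr (by linarith))]
    · rw [integral_Ioi_rpow_of_lt hr (by linarith)]
    · filter_upwards [ae_restrict_mem measurableSet_Ioi] with u hu
      exact Real.rpow_nonneg (by linarith [mem_Ioi.1 hu]) _
  rw [← base, ← lint_shift (fun u => ENNReal.ofReal (u ^ r)) x (Ioi (t - x))]
  congr 1
  rw [Set.preimage_sub_const_Ioi]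
  norm_num

lemma lint_Ioo_refl {e t : ℝ} (he : -1 < e) (ht : 0 ≤ t)
    (base : ∫⁻ u in Ioo 0 t, ENNReal.ofReal (u ^ e) = ENNReal.ofReal (t ^ (e+1) / (e+1))) :
    ∫⁻ x in Ioo 0 t, ENNReal.ofReal ((t - x) ^ e) = ENNReal.ofReal (t ^ (e+1) / (e+1)) := by
  rw [← base]
  have h := (Measure.measurePreserving_sub_left (volume : Measure ℝ) t).setLIntegral_comp_preimage_emb
    (MeasurableEquiv.subLeft t).measurableEmbedding (fun u => ENNReal.ofReal (u ^ e)) (Ioo 0 t)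
  rw [← h]
  congr 1
  rw [Set.preimage_const_sub_Ioo]
  norm_num

lemma key_pointwise {p s x y : ℝ} (hp : 1 < p) (hs0 : 0 < s) (hs1 : s < 1)
    {f' : ℝ → ℝ} (hf' : Measurable f') (hxy : x < y)
    (hint : IntervalIntegrable f' volume x y) (dif : ℝ)
    (hdif : |dif| ≤ ∫ t in x..y, |f' t|) :
    ENNReal.ofReal (|dif| ^ p / |x - y| ^ (1 + s * p)) ≤
      ENNReal.ofReal (s ^ (1 - p) * (y - x) ^ (-(1 + s))) *
        ∫⁻ t in Ioo x y, ENNReal.ofReal (|f' t| ^ p * (t - x) ^ ((1 - s) * (p - 1))) := by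
  have hd : (0:ℝ) < y - x := by linarith
  set d := y - x with hdd
  have hp0 : (0:ℝ) < p := by linarith
  set q := p / (p - 1) with hq
  have hpq : p.HolderConjugate q := Real.HolderConjugate.conjExponent hp
  have hq0 : (0:ℝ) < q := hpq.symm.pos
  set θ := (1 - s) / q with hθ
  have hθq : θ * q = 1 - s := by
    rw [hθ, div_mul_cancel₀ _ hq0.ne']
  have hp1 : p - 1 ≠ 0 := sub_ne_zero.2 (ne_of_gt hp)
  have hθp : θ * p = (1 - s) * (p - 1) := by
    rw [hθ, hq]; field_simp
  set K := ∫⁻ t in Ioo x y, ENNReal.ofReal (|f' t| ^ p * (t - x) ^ ((1 - s) * (p - 1))) with hK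
  set U : ℝ → ℝ≥0∞ := fun t => ENNReal.ofReal (|f' t| * (t - x) ^ θ) with hU
  set V : ℝ → ℝ≥0∞ := fun t => ENNReal.ofReal ((t - x) ^ (-θ)) with hV
  have hUm : Measurable U := (hf'.abs.mul ((meas_rpow_const θ).comp (measurable_id.sub_const x))).ennreal_ofReal
  have hVm : Measurable V := ((meas_rpow_const (-θ)).comp (measurable_id.sub_const x)).ennreal_ofReal
  -- step A
  have hIOn : IntegrableOn (fun t => |f' t|) (Ioo x y) := by
    have := hint.abs
    rwa [intervalIntegrable_iff_integrableOn_Ioo_of_le hxy.le] at this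
  have hA : ENNReal.ofReal (∫ t in x..y, |f' t|)
      = ∫⁻ t in Ioo x y, ENNReal.ofReal (|f' t|) := by
    rw [intervalIntegral.integral_of_le hxy.le, MeasureTheory.integral_Ioc_eq_integral_Ioo]
    exact ofReal_integral_eq_lintegral_ofReal hIOn
      (by filter_upwards with t using abs_nonneg _)
  -- step B
  have hUV : ∫⁻ t in Ioo x y, ENNReal.ofReal (|f' t|) = ∫⁻ t in Ioo x y, (U * V) t := by
    apply setLIntegral_congr_fun measurableSet_Ioo
    intro t ht
    have htx : (0:ℝ) < t - x := by linarith [ht.1]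
    have h1 : (0:ℝ) < (t - x) ^ θ := Real.rpow_pos_of_pos htx _
    simp only [hU, hV, Pi.mul_apply]
    rw [← ENNReal.ofReal_mul (by positivity)]
    rw [mul_assoc, Real.rpow_neg htx.le, mul_inv_cancel₀ (ne_of_gt h1), mul_one]
  have holder := ENNReal.lintegral_mul_le_Lp_mul_Lq (volume.restrict (Ioo x y)) hpq
    hUm.aemeasurable hVm.aemeasurable
  -- step C
  have hCU : ∫⁻ t in Ioo x y, U t ^ p = K := by
    apply setLIntegral_congr_fun measurableSet_Ioo
    intro t ht
    have htx : (0:ℝ) < t - x := by linarith [ht.1]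
    rw [hU]
    beta_reduce
    rw [ENNReal.ofReal_rpow_of_nonneg (by positivity) hp0.le]
    congr 1
    rw [Real.mul_rpow (abs_nonneg _) (Real.rpow_pos_of_pos htx θ).le,
      ← Real.rpow_mul htx.le, hθp]
  -- step D
  have hCV : ∫⁻ t in Ioo x y, V t ^ q = ENNReal.ofReal (d ^ s / s) := by
    have : ∫⁻ t in Ioo x y, V t ^ q = ∫⁻ t in Ioo x y, ENNReal.ofReal ((t - x) ^ (s - 1)) := by
      apply setLIntegral_congr_fun measurableSet_Ioo
      intro t ht
      have htx : (0:ℝ) < t - x := by linarith [ht.1]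
      rw [hV]; beta_reduce; rw [ENNReal.ofReal_rpow_of_nonneg (Real.rpow_nonneg htx.le _) hq0.le,
        ← Real.rpow_mul htx.le]
      congr 2
      rw [neg_mul, hθq]; ring
    rw [this, lint_Ioo_rpow_shift (by linarith) hxy.le]
    norm_num
    rfl
  rw [hCU, hCV] at holder
  -- combine
  have habs : |x - y| = d := by rw [abs_sub_comm, abs_of_pos hd]
  have hB : (0:ℝ) < d ^ (1 + s * p) := Real.rpow_pos_of_pos hd _
  rw [habs, ENNReal.ofReal_div_of_pos hB]
  have h1 : ENNReal.ofReal (|dif| ^ p) ≤ K * ENNReal.ofReal ((d ^ s / s) ^ (p - 1)) := by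
    have h2 : ENNReal.ofReal (|dif| ^ p) = ENNReal.ofReal |dif| ^ p := by
      rw [ENNReal.ofReal_rpow_of_nonneg (abs_nonneg _) hp0.le]
    rw [h2]
    have h3 : ENNReal.ofReal |dif| ≤ ∫⁻ t in Ioo x y, (U * V) t := by
      rw [← hUV, ← hA]; exact ENNReal.ofReal_le_ofReal hdif
    calc ENNReal.ofReal |dif| ^ p
        ≤ (K ^ (1/p) * ENNReal.ofReal (d ^ s / s) ^ (1/q)) ^ p :=
          ENNReal.rpow_le_rpow (h3.trans holder) hp0.le
      _ = K ^ (1/p * p) * ENNReal.ofReal (d ^ s / s) ^ (1/q * p) := by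
          rw [ENNReal.mul_rpow_of_nonneg _ _ hp0.le, ← ENNReal.rpow_mul, ← ENNReal.rpow_mul]
      _ = K * ENNReal.ofReal ((d ^ s / s) ^ (p - 1)) := by
          rw [one_div_mul_cancel (ne_of_gt hp0), ENNReal.rpow_one]
          congr 1
          rw [ENNReal.ofReal_rpow_of_nonneg
            (div_nonneg (Real.rpow_nonneg hd.le _) hs0.le)
            (mul_pos (one_div_pos.2 hq0) hp0).le]
          congr 1
          rw [one_div, inv_mul_eq_div, hpq.div_conj_eq_sub_one]
  have e1 : (d ^ s / s) ^ (p - 1) = d ^ (s * (p - 1)) * s ^ (1 - p) := by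
    rw [Real.div_rpow (Real.rpow_nonneg hd.le s) hs0.le, ← Real.rpow_mul hd.le,
      div_eq_mul_inv, ← Real.rpow_neg hs0.le, (show -(p-1) = 1-p by ring)]
  have e2 : d ^ (s * (p - 1)) / d ^ (1 + s * p) = d ^ (-(1 + s)) := by
    rw [← Real.rpow_sub hd]; congr 1; ring
  have e3 : (d ^ s / s) ^ (p - 1) / d ^ (1 + s * p) = s ^ (1 - p) * d ^ (-(1 + s)) := by
    rw [e1, mul_comm, mul_div_assoc, e2]
  calc ENNReal.ofReal (|dif| ^ p) / ENNReal.ofReal (d ^ (1 + s * p))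
      ≤ K * ENNReal.ofReal ((d ^ s / s) ^ (p - 1)) / ENNReal.ofReal (d ^ (1 + s * p)) :=
        ENNReal.div_le_div_right h1 _
    _ = ENNReal.ofReal (s ^ (1 - p) * d ^ (-(1 + s))) * K := by
        rw [mul_div_assoc, ← ENNReal.ofReal_div_of_pos hB, e3, mul_comm]

lemma measPhi (p s : ℝ) (f' : ℝ → ℝ) (hf' : Measurable f') :
    Measurable (fun q : ℝ × ℝ => ENNReal.ofReal (s ^ (1-p) * (q.2 - q.1) ^ (-(1+s))) *
      ∫⁻ t in Ioo q.1 q.2, ENNReal.ofReal (|f' t| ^ p * (t - q.1) ^ ((1-s)*(p-1)))) := by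
  have hW : Measurable fun q : ℝ × ℝ => ENNReal.ofReal (s ^ (1-p) * (q.2 - q.1) ^ (-(1+s))) :=
    (((meas_rpow_const (-(1+s))).comp (measurable_snd.sub measurable_fst)).const_mul _).ennreal_ofReal
  refine hW.mul ?_
  have hS : MeasurableSet {u : (ℝ × ℝ) × ℝ | u.1.1 < u.2 ∧ u.2 < u.1.2} :=
    (measurableSet_lt (measurable_fst.fst) measurable_snd).inter
      (measurableSet_lt measurable_snd (measurable_fst.snd))
  have hF : Measurable fun u : (ℝ × ℝ) × ℝ =>
      ENNReal.ofReal (|f' u.2| ^ p * (u.2 - u.1.1) ^ ((1-s)*(p-1))) :=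
    ((((meas_rpow_const p).comp hf'.abs).comp measurable_snd).mul
      ((meas_rpow_const ((1-s)*(p-1))).comp (measurable_snd.sub measurable_fst.fst))).ennreal_ofReal
  have key : ∀ q : ℝ × ℝ, (∫⁻ t in Ioo q.1 q.2, ENNReal.ofReal (|f' t| ^ p * (t - q.1) ^ ((1-s)*(p-1))))
      = ∫⁻ t, ({u : (ℝ × ℝ) × ℝ | u.1.1 < u.2 ∧ u.2 < u.1.2}.indicator
          (fun u => ENNReal.ofReal (|f' u.2| ^ p * (u.2 - u.1.1) ^ ((1-s)*(p-1))))) (q, t) := by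
    intro q
    rw [← lintegral_indicator measurableSet_Ioo]
    refine lintegral_congr fun t => ?_
    simp only [Set.indicator_apply, Set.mem_Ioo, Set.mem_setOf_eq]
  simp only [key]
  exact (hF.indicator hS).lintegral_prod_right'

lemma aux_step4 (p s : ℝ) (a : ℝ≥0∞) (hp : 1 < p) (hs0 : 0 < s) (hs1 : s < 1)
    (f' : ℝ → ℝ) (hf' : Measurable f') (x : ℝ) (hx0 : 0 < x)
    (hD : MeasurableSet {x : ℝ | 0 < x ∧ ENNReal.ofReal x < a}) :
    ∫⁻ y in {y : ℝ | 0 < y ∧ ENNReal.ofReal y < a},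
      (ENNReal.ofReal (s ^ (1-p) * (y - x) ^ (-(1+s))) *
        ∫⁻ t in Ioo x y, ENNReal.ofReal (|f' t| ^ p * (t - x) ^ ((1-s)*(p-1))))
      ≤ ENNReal.ofReal (s ^ (1-p) / s) *
        ∫⁻ t in {x : ℝ | 0 < x ∧ ENNReal.ofReal x < a} ∩ Ioi x,
          ENNReal.ofReal (|f' t| ^ p) * ENNReal.ofReal ((t - x) ^ ((1-s)*p - 1)) := by
  set D := {x : ℝ | 0 < x ∧ ENNReal.ofReal x < a} with hDdef
  set S : Set (ℝ × ℝ) := {u : ℝ × ℝ | x < u.2 ∧ u.2 < u.1} with hS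
  set W : ℝ × ℝ → ℝ≥0∞ := fun u =>
    ENNReal.ofReal (s ^ (1-p) * (u.1 - x) ^ (-(1+s))) *
      ENNReal.ofReal (|f' u.2| ^ p * (u.2 - x) ^ ((1-s)*(p-1))) with hW
  have hSm : MeasurableSet S :=
    (measurableSet_lt measurable_const measurable_snd).inter
      (measurableSet_lt measurable_snd measurable_fst)
  have hWm : Measurable W :=
    ((((meas_rpow_const (-(1+s))).comp (measurable_fst.sub_const x)).const_mul _).ennreal_ofReal).mul
      ((((meas_rpow_const p).comp hf'.abs).comp measurable_snd).mul
        ((meas_rpow_const ((1-s)*(p-1))).comp (measurable_snd.sub_const x))).ennreal_ofReal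
  have e1 : ∀ y : ℝ, (ENNReal.ofReal (s ^ (1-p) * (y - x) ^ (-(1+s))) *
      ∫⁻ t in Ioo x y, ENNReal.ofReal (|f' t| ^ p * (t - x) ^ ((1-s)*(p-1))))
      = ∫⁻ t, (S.indicator W) (y, t) := by
    intro y
    rw [← lintegral_const_mul' _ _ ENNReal.ofReal_ne_top, ← lintegral_indicator measurableSet_Ioo]
    refine lintegral_congr fun t => ?_
    simp only [Set.indicator_apply, Set.mem_Ioo, Set.mem_setOf_eq, hS, hW]
  calc ∫⁻ y in D, (ENNReal.ofReal (s ^ (1-p) * (y - x) ^ (-(1+s))) *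
        ∫⁻ t in Ioo x y, ENNReal.ofReal (|f' t| ^ p * (t - x) ^ ((1-s)*(p-1))))
      = ∫⁻ y in D, ∫⁻ t, (S.indicator W) (y, t) := lintegral_congr fun y => e1 y
    _ = ∫⁻ t, ∫⁻ y in D, (S.indicator W) (y, t) :=
        lintegral_lintegral_swap (hWm.indicator hSm).aemeasurable
    _ ≤ ∫⁻ t, (D ∩ Ioi x).indicator (fun t => ENNReal.ofReal (s ^ (1-p)) *
          ENNReal.ofReal (|f' t| ^ p * (t - x) ^ ((1-s)*(p-1))) *
          ENNReal.ofReal ((t - x) ^ (-s) / s)) t := by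
        refine lintegral_mono fun t => ?_
        by_cases hxt : x < t
        · by_cases hta : ENNReal.ofReal t < a
          · have htD : t ∈ D ∩ Ioi x := ⟨⟨lt_trans hx0 hxt, hta⟩, hxt⟩
            rw [Set.indicator_of_mem htD]
            have e2 : ∀ y : ℝ, (S.indicator W) (y, t) = (Ioi t).indicator
                (fun y => ENNReal.ofReal (s ^ (1-p)) * ENNReal.ofReal ((y - x) ^ (-(1+s))) *
                  ENNReal.ofReal (|f' t| ^ p * (t - x) ^ ((1-s)*(p-1)))) y := by
              intro y
              simp only [Set.indicator_apply, Set.mem_setOf_eq, Set.mem_Ioi, hS, hW]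
              rw [if_congr (and_iff_right hxt) rfl rfl]
              congr 1
              rw [ENNReal.ofReal_mul (by positivity)]
            calc ∫⁻ y in D, (S.indicator W) (y, t)
                = ∫⁻ y in D, (Ioi t).indicator _ y := lintegral_congr fun y => e2 y
              _ ≤ ∫⁻ y, (Ioi t).indicator _ y := setLIntegral_le_lintegral _ _
              _ = ∫⁻ y in Ioi t, (ENNReal.ofReal (s ^ (1-p)) * ENNReal.ofReal ((y - x) ^ (-(1+s))) *
                    ENNReal.ofReal (|f' t| ^ p * (t - x) ^ ((1-s)*(p-1)))) :=
                  lintegral_indicator measurableSet_Ioi _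
              _ = ENNReal.ofReal (s ^ (1-p)) * (∫⁻ y in Ioi t, ENNReal.ofReal ((y - x) ^ (-(1+s)))) *
                    ENNReal.ofReal (|f' t| ^ p * (t - x) ^ ((1-s)*(p-1))) := by
                  rw [lintegral_mul_const' _ _ ENNReal.ofReal_ne_top,
                    lintegral_const_mul' _ _ ENNReal.ofReal_ne_top]
              _ = ENNReal.ofReal (s ^ (1-p)) * ENNReal.ofReal (|f' t| ^ p * (t - x) ^ ((1-s)*(p-1))) *
                    ENNReal.ofReal ((t - x) ^ (-s) / s) := by
                  rw [lint_Ioi_rpow_shift (by linarith) hxt,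
                    show -(1+s) + 1 = -s by ring, neg_div_neg_eq]
                  ring
          · have hz : ∀ y ∈ D, (S.indicator W) (y, t) = 0 := by
              intro y hy
              refine Set.indicator_of_notMem ?_ _
              rintro ⟨-, h2⟩
              exact hta (lt_of_le_of_lt (ENNReal.ofReal_le_ofReal h2.le) hy.2)
            rw [setLIntegral_congr_fun hD hz]
            simp
        · have hz : ∀ y ∈ D, (S.indicator W) (y, t) = 0 := fun y _ =>
            Set.indicator_of_notMem (fun hm => hxt hm.1) _
          rw [setLIntegral_congr_fun hD hz,
            Set.indicator_of_notMem (fun hm => hxt hm.2)]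
          simp
    _ = ∫⁻ t in D ∩ Ioi x, (ENNReal.ofReal (s ^ (1-p)) *
          ENNReal.ofReal (|f' t| ^ p * (t - x) ^ ((1-s)*(p-1))) *
          ENNReal.ofReal ((t - x) ^ (-s) / s)) := lintegral_indicator (hD.inter measurableSet_Ioi) _
    _ = ∫⁻ t in D ∩ Ioi x, ENNReal.ofReal (s ^ (1-p) / s) *
          (ENNReal.ofReal (|f' t| ^ p) * ENNReal.ofReal ((t - x) ^ ((1-s)*p - 1))) := by
        refine setLIntegral_congr_fun (hD.inter measurableSet_Ioi) (fun t ht => ?_)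
        have htx : (0:ℝ) < t - x := sub_pos.2 ht.2
        have h1 : (0:ℝ) ≤ |f' t| ^ p := Real.rpow_nonneg (abs_nonneg _) _
        have h2 : (0:ℝ) ≤ |f' t| ^ p * (t - x) ^ ((1-s)*(p-1)) :=
          mul_nonneg h1 (Real.rpow_nonneg htx.le _)
        have e0 : (t-x) ^ ((1-s)*(p-1)) * (t-x) ^ (-s) = (t-x) ^ ((1-s)*p-1) := by
          rw [← Real.rpow_add htx]; congr 1; ring
        have e : s ^ (1-p) * (|f' t| ^ p * (t - x) ^ ((1-s)*(p-1))) * ((t - x) ^ (-s) / s)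
            = s ^ (1-p) / s * (|f' t| ^ p * (t - x) ^ ((1-s)*p-1)) := by
          rw [← e0]; ring
        rw [← ENNReal.ofReal_mul (Real.rpow_nonneg hs0.le _),
          ← ENNReal.ofReal_mul (mul_nonneg (Real.rpow_nonneg hs0.le _) h2), e,
          ENNReal.ofReal_mul (div_nonneg (Real.rpow_nonneg hs0.le _) hs0.le),
          ENNReal.ofReal_mul h1]
    _ = ENNReal.ofReal (s ^ (1-p) / s) *
        ∫⁻ t in D ∩ Ioi x, ENNReal.ofReal (|f' t| ^ p) * ENNReal.ofReal ((t - x) ^ ((1-s)*p - 1)) :=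
        lintegral_const_mul' _ _ ENNReal.ofReal_ne_top

lemma aux_step6 (p s : ℝ) (a : ℝ≥0∞) (hp : 1 < p) (hs0 : 0 < s) (hs1 : s < 1)
    (f' : ℝ → ℝ) (hf' : Measurable f')
    (hD : MeasurableSet {x : ℝ | 0 < x ∧ ENNReal.ofReal x < a}) :
    ∫⁻ x in {x : ℝ | 0 < x ∧ ENNReal.ofReal x < a},
      ∫⁻ t in {x : ℝ | 0 < x ∧ ENNReal.ofReal x < a} ∩ Ioi x,
        ENNReal.ofReal (|f' t| ^ p) * ENNReal.ofReal ((t - x) ^ ((1-s)*p - 1))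
      ≤ ENNReal.ofReal (1 / ((1-s)*p)) *
        ∫⁻ t in {x : ℝ | 0 < x ∧ ENNReal.ofReal x < a},
          ENNReal.ofReal (t ^ ((1-s)*p) * |f' t| ^ p) := by
  set D := {x : ℝ | 0 < x ∧ ENNReal.ofReal x < a} with hDdef
  have hE : (0:ℝ) < (1-s)*p := by nlinarith
  set e : ℝ := (1-s)*p - 1 with he
  have he1 : (-1:ℝ) < e := by simp [he]; linarith
  set F : ℝ × ℝ → ℝ≥0∞ := fun u =>
    {u : ℝ × ℝ | u.1 < u.2}.indicator
      (fun u => ENNReal.ofReal (|f' u.2| ^ p) * ENNReal.ofReal ((u.2 - u.1) ^ e)) u with hF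
  have hFm : Measurable F := by
    refine Measurable.indicator ?_ (measurableSet_lt measurable_fst measurable_snd)
    exact ((((meas_rpow_const p).comp hf'.abs).comp measurable_snd).ennreal_ofReal).mul
      (((meas_rpow_const e).comp (measurable_snd.sub measurable_fst)).ennreal_ofReal)
  have e1 : ∀ x : ℝ, ∫⁻ t in D ∩ Ioi x,
      ENNReal.ofReal (|f' t| ^ p) * ENNReal.ofReal ((t - x) ^ e)
      = ∫⁻ t in D, F (x, t) := by
    intro x
    rw [inter_comm, ← Measure.restrict_restrict measurableSet_Ioi,
      ← lintegral_indicator measurableSet_Ioi]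
    refine lintegral_congr fun t => ?_
    simp only [hF, Set.indicator_apply, Set.mem_Ioi, Set.mem_setOf_eq]
  calc ∫⁻ x in D, ∫⁻ t in D ∩ Ioi x,
        ENNReal.ofReal (|f' t| ^ p) * ENNReal.ofReal ((t - x) ^ e)
      = ∫⁻ x in D, ∫⁻ t in D, F (x, t) := lintegral_congr fun x => e1 x
    _ = ∫⁻ t in D, ∫⁻ x in D, F (x, t) := lintegral_lintegral_swap hFm.aemeasurable
    _ ≤ ∫⁻ t in D, ENNReal.ofReal (|f' t| ^ p) * ENNReal.ofReal (t ^ (e+1) / (e+1)) := by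
        refine setLIntegral_mono' hD fun t ht => ?_
        have e2 : ∀ x : ℝ, F (x, t) = (Iio t).indicator
            (fun x => ENNReal.ofReal (|f' t| ^ p) * ENNReal.ofReal ((t - x) ^ e)) x := by
          intro x
          simp only [hF, Set.indicator_apply, Set.mem_Iio, Set.mem_setOf_eq]
        calc ∫⁻ x in D, F (x, t)
            = ∫⁻ x in D, (Iio t).indicator _ x := lintegral_congr fun x => e2 x
          _ = ∫⁻ x in Iio t ∩ D, ENNReal.ofReal (|f' t| ^ p) * ENNReal.ofReal ((t - x) ^ e) := by
              rw [← Measure.restrict_restrict measurableSet_Iio, ← lintegral_indicator measurableSet_Iio]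
          _ ≤ ∫⁻ x in Ioo 0 t, ENNReal.ofReal (|f' t| ^ p) * ENNReal.ofReal ((t - x) ^ e) := by
              refine lintegral_mono_set fun x hx => ?_
              exact ⟨hx.2.1, hx.1⟩
          _ = ENNReal.ofReal (|f' t| ^ p) * ∫⁻ x in Ioo 0 t, ENNReal.ofReal ((t - x) ^ e) :=
              lintegral_const_mul' _ _ ENNReal.ofReal_ne_top
          _ = ENNReal.ofReal (|f' t| ^ p) * ENNReal.ofReal (t ^ (e+1) / (e+1)) := by
              rw [lint_Ioo_refl he1 ht.1.le (lint_Ioo_rpow he1 ht.1.le)]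
    _ = ENNReal.ofReal (1 / ((1-s)*p)) *
        ∫⁻ t in D, ENNReal.ofReal (t ^ ((1-s)*p) * |f' t| ^ p) := by
        rw [← lintegral_const_mul' _ _ ENNReal.ofReal_ne_top]
        refine lintegral_congr fun t => ?_
        have h1 : (0:ℝ) ≤ |f' t| ^ p := Real.rpow_nonneg (abs_nonneg _) _
        rw [← ENNReal.ofReal_mul h1, ← ENNReal.ofReal_mul (by positivity),
          show e + 1 = (1-s)*p by rw [he]; ring]
        congr 1
        ring

end AuxHardy

set_option maxHeartbeats 1000000

/-- A one-dimensional weighted fractional Hardy-type inequality: for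
`f ∈ W^{1,p}_loc((0,a))` (encoded via the fundamental theorem of calculus with
locally integrable derivative `f'`), the Gagliardo seminorm of `f` on `(0,a)`
is bounded by the weighted `L^p` norm of `f'`, with constant `2/(s^p (1-s) p)`. -/
theorem stmt1 (p s : ℝ) (a : ℝ≥0∞) (hp : 1 < p) (hs0 : 0 < s) (hs1 : s < 1)
    (f f' : ℝ → ℝ) (hf' : Measurable f')
    (hftc : ∀ x y : ℝ, 0 < x → ENNReal.ofReal x < a → 0 < y → ENNReal.ofReal y < a → x ≤ y →
      IntervalIntegrable f' volume x y ∧ f y - f x = ∫ t in x..y, f' t) :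
    ∫⁻ x in {x : ℝ | 0 < x ∧ ENNReal.ofReal x < a},
      ∫⁻ y in {y : ℝ | 0 < y ∧ ENNReal.ofReal y < a},
        ENNReal.ofReal (|f x - f y| ^ p / |x - y| ^ (1 + s * p))
      ≤ ENNReal.ofReal (2 / (s ^ p * (1 - s) * p)) *
        ∫⁻ x in {x : ℝ | 0 < x ∧ ENNReal.ofReal x < a},
          ENNReal.ofReal (x ^ ((1 - s) * p) * |f' x| ^ p) := by
  have hp0 : (0:ℝ) < p := by linarith
  set D := {x : ℝ | 0 < x ∧ ENNReal.ofReal x < a} with hDdef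
  have hD : MeasurableSet D := by
    rw [hDdef, Set.setOf_and]
    exact measurableSet_Ioi.inter (ENNReal.measurable_ofReal measurableSet_Iio)
  set Φ : ℝ → ℝ → ℝ≥0∞ := fun x y =>
    ENNReal.ofReal (s ^ (1-p) * (y - x) ^ (-(1+s))) *
      ∫⁻ t in Ioo x y, ENNReal.ofReal (|f' t| ^ p * (t - x) ^ ((1-s)*(p-1))) with hΦ
  have hΦm : Measurable fun q : ℝ × ℝ => Φ q.1 q.2 := by
    simp only [hΦ]; exact measPhi p s f' hf'
  have hFb : ∀ x ∈ D, ∀ y ∈ D,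
      ENNReal.ofReal (|f x - f y| ^ p / |x - y| ^ (1 + s * p)) ≤ Φ x y + Φ y x := by
    intro x hx y hy
    rcases lt_trichotomy x y with hxy | rfl | hyx
    · refine le_trans ?_ le_self_add
      obtain ⟨hint, heq⟩ := hftc x y hx.1 hx.2 hy.1 hy.2 hxy.le
      refine key_pointwise hp hs0 hs1 hf' hxy hint _ ?_
      rw [abs_sub_comm, heq]
      exact intervalIntegral.abs_integral_le_integral_abs hxy.le
    · rw [sub_self, abs_zero, Real.zero_rpow (ne_of_gt hp0), zero_div, ENNReal.ofReal_zero]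
      exact zero_le
    · refine le_trans ?_ le_add_self
      obtain ⟨hint, heq⟩ := hftc y x hy.1 hy.2 hx.1 hx.2 hyx.le
      have hb : |f x - f y| ≤ ∫ t in y..x, |f' t| := by
        rw [heq]
        exact intervalIntegral.abs_integral_le_integral_abs hyx.le
      have := key_pointwise hp hs0 hs1 hf' hyx hint (f x - f y) hb
      rwa [abs_sub_comm y x] at this
  have mΦx : ∀ x : ℝ, Measurable fun y => Φ x y :=
    fun x => hΦm.comp measurable_prodMk_left
  calc ∫⁻ x in D, ∫⁻ y in D, ENNReal.ofReal (|f x - f y| ^ p / |x - y| ^ (1 + s * p))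
      ≤ ∫⁻ x in D, ∫⁻ y in D, (Φ x y + Φ y x) :=
        setLIntegral_mono' hD fun x hx => setLIntegral_mono' hD fun y hy => hFb x hx y hy
    _ = (∫⁻ x in D, ∫⁻ y in D, Φ x y) + ∫⁻ x in D, ∫⁻ y in D, Φ y x := by
        rw [lintegral_congr fun x => lintegral_add_left (mΦx x) _]
        exact lintegral_add_left (hΦm.lintegral_prod_right') _
    _ = (∫⁻ x in D, ∫⁻ y in D, Φ x y) + ∫⁻ y in D, ∫⁻ x in D, Φ y x := by
        congr 1
        exact lintegral_lintegral_swap ((hΦm.comp measurable_swap).aemeasurable)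
    _ = 2 * ∫⁻ x in D, ∫⁻ y in D, Φ x y := (two_mul _).symm
    _ ≤ 2 * (ENNReal.ofReal (s ^ (1-p) / s) * (ENNReal.ofReal (1 / ((1-s)*p)) *
          ∫⁻ t in D, ENNReal.ofReal (t ^ ((1-s)*p) * |f' t| ^ p))) := by
        refine mul_le_mul_of_nonneg_left ?_ zero_le
        calc ∫⁻ x in D, ∫⁻ y in D, Φ x y
            ≤ ∫⁻ x in D, ENNReal.ofReal (s ^ (1-p) / s) *
                ∫⁻ t in D ∩ Ioi x, ENNReal.ofReal (|f' t| ^ p) *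
                  ENNReal.ofReal ((t - x) ^ ((1-s)*p - 1)) :=
              setLIntegral_mono' hD fun x hx => aux_step4 p s a hp hs0 hs1 f' hf' x hx.1 hD
          _ = ENNReal.ofReal (s ^ (1-p) / s) * ∫⁻ x in D,
                ∫⁻ t in D ∩ Ioi x, ENNReal.ofReal (|f' t| ^ p) *
                  ENNReal.ofReal ((t - x) ^ ((1-s)*p - 1)) :=
              lintegral_const_mul' _ _ ENNReal.ofReal_ne_top
          _ ≤ ENNReal.ofReal (s ^ (1-p) / s) * (ENNReal.ofReal (1 / ((1-s)*p)) *
                ∫⁻ t in D, ENNReal.ofReal (t ^ ((1-s)*p) * |f' t| ^ p)) :=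
              mul_le_mul_of_nonneg_left (aux_step6 p s a hp hs0 hs1 f' hf' hD) zero_le
    _ = ENNReal.ofReal (2 / (s ^ p * (1 - s) * p)) *
          ∫⁻ x in D, ENNReal.ofReal (x ^ ((1 - s) * p) * |f' x| ^ p) := by
        have hre : (2:ℝ≥0∞) * (ENNReal.ofReal (s ^ (1-p) / s) *
            (ENNReal.ofReal (1 / ((1-s)*p)) *
              ∫⁻ t in D, ENNReal.ofReal (t ^ ((1-s)*p) * |f' t| ^ p)))
            = (2 * (ENNReal.ofReal (s ^ (1-p) / s) * ENNReal.ofReal (1 / ((1-s)*p)))) *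
              ∫⁻ t in D, ENNReal.ofReal (t ^ ((1-s)*p) * |f' t| ^ p) := by ring
        rw [hre]
        congr 1
        rw [show (2:ℝ≥0∞) = ENNReal.ofReal 2 from (ENNReal.ofReal_ofNat 2).symm,
          ← ENNReal.ofReal_mul (div_nonneg (Real.rpow_nonneg hs0.le _) hs0.le),
          ← ENNReal.ofReal_mul (by norm_num)]
        congr 1
        have hsp : (0:ℝ) < s ^ p := Real.rpow_pos_of_pos hs0 p
        have hkey : s ^ (1-p) / s = (s ^ p)⁻¹ := by
          rw [show (1:ℝ)-p = -p+1 by ring, Real.rpow_add hs0, Real.rpow_one,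
            Real.rpow_neg hs0.le]
          field_simp
        rw [hkey]
        have h1s : (0:ℝ) < 1 - s := by linarith
        field_simp
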